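/- For probability measures μ and ν on a measurable space with ν absolutely continuous with respect to μ and dν/dμ square μ-integrable, the quadratic divergence of the n-fold product measures satisfies d(μ^⊗n, ν^⊗n) = (d(μ,ν) + 1)^n - 1, where d(μ,ν) = ∫ (1 - dν/dμ)² dμ. -/

import Mathlib

open MeasureTheory
open scoped ENNReal

private lemma lintegral_fin_prod_aux {X : Type*} [MeasurableSpace X] (μ : Measure X)
    [SigmaFinite μ] : ∀ {n : ℕ} (g : Fin n → X → ℝ≥0∞), (∀ i, Measurable (g i)) →
    ∫⁻ x, ∏ i, g i (x i) ∂(Measure.pi fun _ : Fin n => μ) = ∏ i, ∫⁻ x, g i x ∂μ := by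
  intro n
  induction n with
  | zero => intro g _; simp
  | succ n ih =>
    intro g hg
    have h := (measurePreserving_piFinSuccAbove (fun _ : Fin (n+1) => μ) 0).symm
    rw [← h.lintegral_comp_emb (MeasurableEquiv.measurableEmbedding _)]
    have heq : ∀ y : X × (Fin n → X),
        ∏ i, g i (((MeasurableEquiv.piFinSuccAbove (fun _ : Fin (n+1) => X) 0).symm y) i)
          = g 0 y.1 * ∏ i : Fin n, g i.succ (y.2 i) := by
      intro y
      simp_rw [MeasurableEquiv.piFinSuccAbove_symm_apply, Fin.insertNthEquiv,
        Fin.prod_univ_succ, Fin.insertNth_zero]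
      simp [Fin.zero_succAbove]
    simp only [Function.comp_def, heq]
    rw [lintegral_prod_mul (f := g 0) (g := fun y : Fin n → X => ∏ i, g i.succ (y i))
      (hg 0).aemeasurable
      (Finset.measurable_prod _ fun i _ => (hg i.succ).comp (measurable_pi_apply i)).aemeasurable,
      ih _ fun i => hg i.succ, Fin.prod_univ_succ]

private lemma expand_sq_int {Y : Type*} [MeasurableSpace Y] (m : Measure Y)
    [IsProbabilityMeasure m] (P : Y → ℝ) (h1 : Integrable P m)
    (h2 : Integrable (fun x => P x ^ 2) m) :
    ∫ x, (1 - P x) ^ 2 ∂m = 1 - 2 * ∫ x, P x ∂m + ∫ x, P x ^ 2 ∂m := by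
  have hkey : ∀ x, (1 - P x) ^ 2 = 1 - 2 * P x + P x ^ 2 := fun x => by ring
  have hsub : Integrable (fun x => 1 - 2 * P x) m := by
    exact (integrable_const 1).sub (h1.const_mul 2)
  have hmul : Integrable (fun x => 2 * P x) m := h1.const_mul 2
  simp_rw [hkey]
  rw [integral_add hsub h2, integral_sub (integrable_const 1) hmul, integral_const,
    integral_const_mul]
  simp

/-- The quadratic divergence of the `n`-fold product measures:
`d(μ^⊗n, ν^⊗n) = (d(μ,ν) + 1)^n - 1`, where `d(μ,ν) = ∫ (1 - dν/dμ)² dμ`. -/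
theorem qdiv_pi_eq {X : Type*} [MeasurableSpace X] (μ ν : Measure X)
    [IsProbabilityMeasure μ] [IsProbabilityMeasure ν] (n : ℕ)
    (hac : ν ≪ μ) (hL2 : MemLp (fun x => (ν.rnDeriv μ x).toReal) 2 μ) :
    ∫ x, (1 - ((Measure.pi fun _ : Fin n => ν).rnDeriv (Measure.pi fun _ : Fin n => μ) x).toReal) ^ 2
        ∂(Measure.pi fun _ : Fin n => μ)
      = ((∫ x, (1 - (ν.rnDeriv μ x).toReal) ^ 2 ∂μ) + 1) ^ n - 1 := by
  set f := ν.rnDeriv μ with hf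
  have hfm : Measurable f := Measure.measurable_rnDeriv ν μ
  set t : X → ℝ := fun x => (f x).toReal with ht
  have htm : Measurable t := hfm.ennreal_toReal
  have hgm : Measurable (fun x : Fin n → X => ∏ i, f (x i)) :=
    Finset.measurable_prod _ fun i _ => hfm.comp (measurable_pi_apply i)
  -- the product measure of ν is the product density against the product measure of μ
  have hpi : (Measure.pi fun _ : Fin n => ν)
      = (Measure.pi fun _ : Fin n => μ).withDensity (fun x => ∏ i, f (x i)) := by
    refine Measure.pi_eq fun s hs => ?_
    rw [withDensity_apply _ (MeasurableSet.univ_pi hs),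
      ← lintegral_indicator (MeasurableSet.univ_pi hs)]
    have hind : ∀ x : Fin n → X, (Set.univ.pi s).indicator (fun x => ∏ i, f (x i)) x
        = ∏ i, (s i).indicator f (x i) := by
      intro x
      by_cases hx : x ∈ Set.univ.pi s
      · rw [Set.indicator_of_mem hx]
        refine Finset.prod_congr rfl fun i _ => ?_
        rw [Set.indicator_of_mem (hx i (Set.mem_univ i))]
      · rw [Set.indicator_of_notMem hx]
        obtain ⟨i, hi⟩ : ∃ i, x i ∉ s i := by simpa [Set.mem_pi] using hx
        exact (Finset.prod_eq_zero (Finset.mem_univ i)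
          (by rw [Set.indicator_of_notMem hi])).symm
    simp_rw [hind]
    rw [lintegral_fin_prod_aux μ _ fun i => hfm.indicator (hs i)]
    refine Finset.prod_congr rfl fun i _ => ?_
    rw [lintegral_indicator (hs i), Measure.setLIntegral_rnDeriv hac]
  have hrn : (Measure.pi fun _ : Fin n => ν).rnDeriv (Measure.pi fun _ : Fin n => μ)
      =ᵐ[Measure.pi fun _ : Fin n => μ] fun x => ∏ i, f (x i) := by
    rw [hpi]; exact Measure.rnDeriv_withDensity _ hgm
  have hcongr : ∫ x, (1 - ((Measure.pi fun _ : Fin n => ν).rnDeriv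
        (Measure.pi fun _ : Fin n => μ) x).toReal) ^ 2 ∂(Measure.pi fun _ : Fin n => μ)
      = ∫ x, (1 - ∏ i, t (x i)) ^ 2 ∂(Measure.pi fun _ : Fin n => μ) := by
    refine integral_congr_ae ?_
    filter_upwards [hrn] with x hx
    rw [hx, ENNReal.toReal_prod]
  rw [hcongr]
  -- integrability
  have ht1 : Integrable t μ := hL2.integrable one_le_two
  have ht2 : Integrable (fun x => t x ^ 2) μ := hL2.integrable_sq
  letI : MeasureSpace X := ⟨μ⟩
  have hvol : (volume : Measure (Fin n → X)) = Measure.pi fun _ : Fin n => μ := rfl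
  have hP : Integrable (fun x : Fin n → X => ∏ i, t (x i)) (Measure.pi fun _ : Fin n => μ) := by
    rw [← hvol]; exact Integrable.fintype_prod (f := fun _ : Fin n => t) fun _ => ht1
  have hP2 : Integrable (fun x : Fin n → X => (∏ i, t (x i)) ^ 2)
      (Measure.pi fun _ : Fin n => μ) := by
    have : Integrable (fun x : Fin n → X => ∏ i, t (x i) ^ 2)
        (Measure.pi fun _ : Fin n => μ) := by
      rw [← hvol]; exact Integrable.fintype_prod (f := fun _ : Fin n => fun y => t y ^ 2)
        fun _ => ht2
    simpa [Finset.prod_pow] using this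
  -- integral values
  have hInt_t : ∫ x, t x ∂μ = 1 := by
    rw [ht, hf, Measure.integral_toReal_rnDeriv hac]
    simp
  have hIP : ∫ x, ∏ i, t (x i) ∂(Measure.pi fun _ : Fin n => μ) = 1 := by
    rw [← hvol]
    rw [integral_fintype_prod_volume_eq_pow (ι := Fin n) t,
      show (volume : Measure X) = μ from rfl, hInt_t, one_pow]
  have hIP2 : ∫ x, (∏ i, t (x i)) ^ 2 ∂(Measure.pi fun _ : Fin n => μ)
      = (∫ x, t x ^ 2 ∂μ) ^ n := by
    have : ∫ x : Fin n → X, ∏ i, t (x i) ^ 2 ∂(Measure.pi fun _ : Fin n => μ)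
        = (∫ x, t x ^ 2 ∂μ) ^ n := by
      rw [← hvol]
      rw [integral_fintype_prod_volume_eq_pow (ι := Fin n) (fun y => t y ^ 2),
        show (volume : Measure X) = μ from rfl, Fintype.card_fin]
    rw [← this]
    congr 1 with x
    rw [Finset.prod_pow]
  -- expand squares
  rw [expand_sq_int (Measure.pi fun _ : Fin n => μ) _ hP hP2, hIP, hIP2,
    expand_sq_int μ t ht1 ht2, hInt_t]
  ring
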